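/- Suppose Assumption A2 holds, and let θ ∈ (1/2, 1], λ ∈ (0, 2θ−1], τ ∈ (0,1). Then for all x ∈ ℝ^d, V_θ(x) ≥ [1 + (1−θ+λ)L₃τ]|x|² − L₂(1−θ+λ)τ. In particular, V_θ(x) → ∞ as |x| → ∞. -/
import Mathlib


open MeasureTheory Filter
local notation "⟪" x ", " y "⟫" => @inner ℝ _ _ x y

/-- Squared Frobenius (Hilbert–Schmidt) norm of a real `d × m` matrix. -/
noncomputable def frobSq {d m : ℕ} (M : Matrix (Fin d) (Fin m) ℝ) : ℝ :=
  ∑ i, ∑ j, (M i j) ^ 2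

/-- The Lyapunov function `V_θ(x) = |x - (1-θ+λ)τ b(x)|² + (2θ-1-λ)τ‖σ(x)‖² + 1`. -/
noncomputable def Vtheta {d m : ℕ}
    (b : EuclideanSpace ℝ (Fin d) → EuclideanSpace ℝ (Fin d))
    (σ : EuclideanSpace ℝ (Fin d) → Matrix (Fin d) (Fin m) ℝ)
    (θ lam τ : ℝ) (z : EuclideanSpace ℝ (Fin d)) : ℝ :=
  ‖z - ((1 - θ + lam) * τ) • b z‖ ^ 2 + (2 * θ - 1 - lam) * τ * frobSq (σ z) + 1

/-- coercivity lower bound for the Lyapunov function `V_θ`; in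
particular `V_θ(x) → ∞` as `|x| → ∞`. -/
theorem Vtheta_coercive {d m : ℕ}
    (b : EuclideanSpace ℝ (Fin d) → EuclideanSpace ℝ (Fin d))
    (σ : EuclideanSpace ℝ (Fin d) → Matrix (Fin d) (Fin m) ℝ)
    (L₂ L₃ : ℝ) (hL₂ : 0 < L₂) (hL₃ : 0 < L₃)
    (hA2 : ∀ x : EuclideanSpace ℝ (Fin d),
      2 * ⟪b x, x⟫ + frobSq (σ x) ≤ L₂ - L₃ * ‖x‖ ^ 2)
    (θ lam τ : ℝ) (hθ : θ ∈ Set.Ioc (1/2 : ℝ) 1) (hlam : lam ∈ Set.Ioc (0 : ℝ) (2 * θ - 1))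
    (hτ : τ ∈ Set.Ioo (0 : ℝ) 1) :
    (∀ x : EuclideanSpace ℝ (Fin d),
        Vtheta b σ θ lam τ x ≥
          (1 + (1 - θ + lam) * L₃ * τ) * ‖x‖ ^ 2 - L₂ * (1 - θ + lam) * τ) ∧
      (∀ M : ℝ, ∃ R : ℝ, ∀ x : EuclideanSpace ℝ (Fin d),
        R ≤ ‖x‖ → M ≤ Vtheta b σ θ lam τ x) := by
  obtain ⟨hθ1, hθ2⟩ := hθ
  obtain ⟨hlam1, hlam2⟩ := hlam
  obtain ⟨hτ1, hτ2⟩ := hτ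
  have hαpos : 0 < (1 - θ + lam) * τ := by
    apply mul_pos _ hτ1; linarith
  have key : ∀ x : EuclideanSpace ℝ (Fin d),
      Vtheta b σ θ lam τ x ≥
        (1 + (1 - θ + lam) * L₃ * τ) * ‖x‖ ^ 2 - L₂ * (1 - θ + lam) * τ := by
    intro x
    have hfrob : 0 ≤ frobSq (σ x) := by
      unfold frobSq; positivity
    have hexp : ‖x - ((1 - θ + lam) * τ) • b x‖ ^ 2 =
        ‖x‖ ^ 2 - 2 * (((1 - θ + lam) * τ) * ⟪b x, x⟫) +
          ((1 - θ + lam) * τ) ^ 2 * ‖b x‖ ^ 2 := by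
      rw [norm_sub_sq_real, real_inner_smul_right, norm_smul, real_inner_comm,
        Real.norm_eq_abs, mul_pow, sq_abs]
    have hA := mul_le_mul_of_nonneg_left (hA2 x) hαpos.le
    have hb2 : 0 ≤ ((1 - θ + lam) * τ) ^ 2 * ‖b x‖ ^ 2 := by positivity
    have hθτ : 0 ≤ θ * τ * frobSq (σ x) := by
      apply mul_nonneg (mul_nonneg (by linarith) hτ1.le) hfrob
    unfold Vtheta
    rw [hexp]
    nlinarith [hA, hb2, hθτ, hfrob]
  refine ⟨key, fun M => ?_⟩
  set c := 1 + (1 - θ + lam) * L₃ * τ with hc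
  have hcpos : 0 < c := by
    have : 0 < (1 - θ + lam) * L₃ * τ := by
      apply mul_pos (mul_pos (by linarith) hL₃) hτ1
    linarith
  set q := (M + L₂ * (1 - θ + lam) * τ) / c with hq
  refine ⟨Real.sqrt (max 0 q), fun x hx => ?_⟩
  have hR0 : (0:ℝ) ≤ Real.sqrt (max 0 q) := Real.sqrt_nonneg _
  have hsq : Real.sqrt (max 0 q) ^ 2 = max 0 q := Real.sq_sqrt (le_max_left _ _)
  have hx2 : max 0 q ≤ ‖x‖ ^ 2 := by
    rw [← hsq]; exact pow_le_pow_left₀ hR0 hx 2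
  have hq2 : q ≤ ‖x‖ ^ 2 := le_trans (le_max_right _ _) hx2
  have h1 : c * q ≤ c * ‖x‖ ^ 2 := mul_le_mul_of_nonneg_left hq2 hcpos.le
  have h2 : c * q = M + L₂ * (1 - θ + lam) * τ := by
    rw [hq, mul_div_cancel₀ _ hcpos.ne']
  have := key x
  linarith
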